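/- Let 1 < p < q < N with q* = Nq/(N−q), let r ∈ (q, q*), let V₀ > 0 and let V : ℝ^N → ℝ be continuous with V(x) ≥ V₀ for all x. Let f : ℝ → ℝ be continuous with lim_{t → 0} f(t)/|t|^{p-1} = 0 and lim_{|t| → ∞} f(t)/|t|^{r-1} = 0. For a continuously differentiable compactly supported u : ℝ^N → ℝ and t ∈ {p, q} set ‖u‖_{V,t}^t = ∫_{ℝ^N} ‖∇u(x)‖^t dx + ∫_{ℝ^N} V(x)|u(x)|^t dx. Then there exists κ > 0 such that every continuously differentiable compactly supported u : ℝ^N → ℝ that is not identically zero and satisfies the Nehari identity ‖u‖_{V,p}^p + ‖u‖_{V,q}^q = ∫_{ℝ^N} f(u(x)) u(x) dx must satisfy ‖u‖_{V,p} + ‖u‖_{V,q} ≥ κ. -/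

import Mathlib

open Filter MeasureTheory
open scoped Topology

/-- `‖u‖_{V,t}^t = ∫ ‖∇u‖^t dx + ∫ V |u|^t dx`. -/
noncomputable def pNormPow (N : ℕ) (V : EuclideanSpace ℝ (Fin N) → ℝ) (t : ℝ)
    (u : EuclideanSpace ℝ (Fin N) → ℝ) : ℝ :=
  (∫ x : EuclideanSpace ℝ (Fin N), ‖fderiv ℝ u x‖ ^ t)
    + ∫ x : EuclideanSpace ℝ (Fin N), V x * |u x| ^ t

/-- `‖u‖_{V,t}`. -/
noncomputable def vNorm (N : ℕ) (V : EuclideanSpace ℝ (Fin N) → ℝ) (t : ℝ)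
    (u : EuclideanSpace ℝ (Fin N) → ℝ) : ℝ :=
  (pNormPow N V t u) ^ (1 / t)

open scoped ENNReal NNReal

lemma rpow_sub_one_mul {x e : ℝ} (hx : 0 < x) : x ^ (e - 1) * x = x ^ e := by
  nth_rewrite 2 [← Real.rpow_one x]
  rw [← Real.rpow_add hx]
  norm_num

lemma cont_abs_rpow {t : ℝ} (ht : 0 < t) : Continuous (fun y : ℝ => |y| ^ t) :=
  continuous_iff_continuousAt.mpr fun _ =>
    (continuous_abs.continuousAt).rpow_const (Or.inr ht.le)

section perU

variable {N : ℕ} {u : EuclideanSpace ℝ (Fin N) → ℝ}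

lemma int_abs_rpow (cu : Continuous u) (hu2 : HasCompactSupport u) {t : ℝ} (ht : 0 < t) :
    Integrable (fun x => |u x| ^ t) := by
  have hcont : Continuous (fun x => |u x| ^ t) := (cont_abs_rpow ht).comp cu
  have hcs : HasCompactSupport (fun x => |u x| ^ t) :=
    hu2.comp_left (g := fun y : ℝ => |y| ^ t) (by simp [Real.zero_rpow ht.ne'])
  exact hcont.integrable_of_hasCompactSupport hcs

lemma int_V_abs_rpow {V : EuclideanSpace ℝ (Fin N) → ℝ} (hV : Continuous V)
    (cu : Continuous u) (hu2 : HasCompactSupport u) {t : ℝ} (ht : 0 < t) :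
    Integrable (fun x => V x * |u x| ^ t) := by
  have hcont : Continuous (fun x => V x * |u x| ^ t) :=
    hV.mul ((cont_abs_rpow ht).comp cu)
  have hcs : HasCompactSupport (fun x => |u x| ^ t) :=
    hu2.comp_left (g := fun y : ℝ => |y| ^ t) (by simp [Real.zero_rpow ht.ne'])
  exact hcont.integrable_of_hasCompactSupport (hcs.mul_left)

lemma int_grad_rpow (hu1 : ContDiff ℝ 1 u) (hu2 : HasCompactSupport u) {t : ℝ} (ht : 0 < t) :
    Integrable (fun x => ‖fderiv ℝ u x‖ ^ t) := by
  have cdu : Continuous (fderiv ℝ u) := hu1.continuous_fderiv one_ne_zero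
  have hcont : Continuous (fun x => ‖fderiv ℝ u x‖ ^ t) :=
    cdu.norm.rpow_const (fun x => Or.inr ht.le)
  have hcs : HasCompactSupport (fun x => ‖fderiv ℝ u x‖ ^ t) :=
    (hu2.fderiv ℝ).comp_left (g := fun L : (EuclideanSpace ℝ (Fin N)) →L[ℝ] ℝ => ‖L‖ ^ t)
      (by simp [Real.zero_rpow ht.ne'])
  exact hcont.integrable_of_hasCompactSupport hcs

lemma integral_pos_aux {g : EuclideanSpace ℝ (Fin N) → ℝ} (hg : Continuous g)
    (hint : Integrable g) (hnn : ∀ x, 0 ≤ g x) {x₀ : EuclideanSpace ℝ (Fin N)}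
    (hx₀ : 0 < g x₀) : 0 < ∫ x, g x := by
  rw [integral_pos_iff_support_of_nonneg (fun x => hnn x) hint]
  have hopen : IsOpen {x | 0 < g x} := isOpen_lt continuous_const hg
  have hsub : {x | 0 < g x} ⊆ Function.support g := fun x hx => ne_of_gt hx
  calc (0:ℝ≥0∞) < volume {x | 0 < g x} := hopen.measure_pos volume ⟨x₀, hx₀⟩
  _ ≤ volume (Function.support g) := measure_mono hsub

end perU

lemma bound_aux {p r V₀ : ℝ} (hp : 0 < p) (hr : 0 < r) (hV₀ : 0 < V₀) {f : ℝ → ℝ}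
    (hf : Continuous f)
    (h0 : Tendsto (fun t : ℝ => f t / |t| ^ (p - 1)) (𝓝[≠] (0 : ℝ)) (𝓝 0))
    (hinf : Tendsto (fun t : ℝ => f t / |t| ^ (r - 1)) (Filter.cocompact ℝ) (𝓝 0)) :
    ∃ C : ℝ, 1 ≤ C ∧ ∀ t : ℝ, f t * t ≤ V₀ / 2 * |t| ^ p + C * |t| ^ r := by
  have h0' : ∀ᶠ t in 𝓝[≠] (0:ℝ), |f t / |t| ^ (p - 1)| < V₀ / 2 := by
    have := Metric.tendsto_nhds.mp h0 (V₀ / 2) (by positivity)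
    simpa only [Real.dist_eq, sub_zero] using this
  rw [eventually_nhdsWithin_iff, Metric.eventually_nhds_iff] at h0'
  obtain ⟨δ, hδ, hsmall⟩ := h0'
  have hinf' : ∀ᶠ t in Filter.cocompact ℝ, |f t / |t| ^ (r - 1)| < 1 := by
    have := Metric.tendsto_nhds.mp hinf 1 one_pos
    simpa only [Real.dist_eq, sub_zero] using this
  rw [Filter.hasBasis_cocompact.eventually_iff] at hinf'
  obtain ⟨K, hK, hlarge⟩ := hinf'
  obtain ⟨M, hM⟩ := hK.isBounded.subset_closedBall 0
  obtain ⟨K₀, hK₀⟩ := (isCompact_Icc (a := -(|M|+1)) (b := |M|+1)).exists_bound_of_continuousOn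
    ((hf.mul continuous_id).continuousOn)
  set δ' : ℝ := min (δ / 2) 1 with hδ'def
  have hδ'0 : 0 < δ' := by positivity
  have hδ'δ : δ' < δ := (min_le_left _ _).trans_lt (by linarith)
  refine ⟨1 + max K₀ 0 / δ' ^ r, by
    have : (0:ℝ) ≤ max K₀ 0 / δ' ^ r := by positivity
    linarith, fun t => ?_⟩
  have habs : (0:ℝ) ≤ |t| := abs_nonneg t
  rcases le_or_gt |t| δ' with h1 | h1
  · rcases eq_or_ne t 0 with rfl | ht0
    · simp only [abs_zero, Real.zero_rpow hp.ne', Real.zero_rpow hr.ne', mul_zero, add_zero,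
        zero_mul]
      norm_num
    · have htpos : 0 < |t| := abs_pos.mpr ht0
      have hdist : dist t 0 < δ := by rw [Real.dist_eq, sub_zero]; linarith
      have hb := hsmall hdist ht0
      have hfb : |f t| ≤ V₀ / 2 * |t| ^ (p - 1) := by
        rw [abs_div, abs_of_nonneg (Real.rpow_nonneg habs _)] at hb
        have hrp : 0 < |t| ^ (p - 1) := Real.rpow_pos_of_pos htpos _
        have : |f t| = |f t| / |t| ^ (p-1) * |t| ^ (p-1) := by field_simp
        rw [this]
        exact mul_le_mul_of_nonneg_right hb.le hrp.le
      calc f t * t ≤ |f t * t| := le_abs_self _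
      _ = |f t| * |t| := abs_mul _ _
      _ ≤ V₀ / 2 * |t| ^ (p - 1) * |t| := mul_le_mul_of_nonneg_right hfb habs
      _ = V₀ / 2 * |t| ^ p := by rw [mul_assoc, rpow_sub_one_mul htpos]
      _ ≤ V₀ / 2 * |t| ^ p + (1 + max K₀ 0 / δ' ^ r) * |t| ^ r := by
          have : (0:ℝ) ≤ (1 + max K₀ 0 / δ' ^ r) * |t| ^ r := by positivity
          linarith
  · rcases le_or_gt |t| (|M|+1) with h2 | h2
    · have hmem : t ∈ Set.Icc (-(|M|+1)) (|M|+1) := by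
        constructor
        · linarith [neg_abs_le t]
        · linarith [le_abs_self t]
      have hb := hK₀ t hmem
      simp only [Real.norm_eq_abs, id_eq, id] at hb
      have hδr : 0 < δ' ^ r := Real.rpow_pos_of_pos hδ'0 _
      have h3 : δ' ^ r ≤ |t| ^ r := Real.rpow_le_rpow hδ'0.le h1.le hr.le
      calc f t * t ≤ |f t * t| := le_abs_self _
      _ ≤ max K₀ 0 := hb.trans (le_max_left _ _)
      _ = max K₀ 0 / δ' ^ r * δ' ^ r := by field_simp
      _ ≤ max K₀ 0 / δ' ^ r * |t| ^ r := mul_le_mul_of_nonneg_left h3 (by positivity)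
      _ ≤ (1 + max K₀ 0 / δ' ^ r) * |t| ^ r := by
          apply mul_le_mul_of_nonneg_right _ (Real.rpow_nonneg habs _)
          linarith
      _ ≤ V₀ / 2 * |t| ^ p + (1 + max K₀ 0 / δ' ^ r) * |t| ^ r := by
          have : (0:ℝ) ≤ V₀ / 2 * |t| ^ p := by positivity
          linarith
    · have htK : t ∉ K := by
        intro htK
        have h4 := hM htK
        rw [Metric.mem_closedBall, Real.dist_eq, sub_zero] at h4
        have : |t| ≤ |M| := h4.trans (le_abs_self M)
        linarith
      have hb := hlarge htK
      have htpos : 0 < |t| := by linarith [abs_nonneg M]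
      have hfb : |f t| ≤ |t| ^ (r - 1) := by
        rw [abs_div, abs_of_nonneg (Real.rpow_nonneg habs _)] at hb
        have hrp : 0 < |t| ^ (r - 1) := Real.rpow_pos_of_pos htpos _
        have heq : |f t| = |f t| / |t| ^ (r-1) * |t| ^ (r-1) := by field_simp
        rw [heq]
        calc |f t| / |t| ^ (r-1) * |t| ^ (r-1) ≤ 1 * |t| ^ (r-1) :=
            mul_le_mul_of_nonneg_right hb.le hrp.le
        _ = |t| ^ (r-1) := one_mul _
      calc f t * t ≤ |f t * t| := le_abs_self _
      _ = |f t| * |t| := abs_mul _ _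
      _ ≤ |t| ^ (r - 1) * |t| := mul_le_mul_of_nonneg_right hfb habs
      _ = |t| ^ r := rpow_sub_one_mul htpos
      _ ≤ (1 + max K₀ 0 / δ' ^ r) * |t| ^ r := by
          nth_rewrite 1 [← one_mul (|t| ^ r)]
          apply mul_le_mul_of_nonneg_right _ (Real.rpow_nonneg habs _)
          have : (0:ℝ) ≤ max K₀ 0 / δ' ^ r := by positivity
          linarith
      _ ≤ V₀ / 2 * |t| ^ p + (1 + max K₀ 0 / δ' ^ r) * |t| ^ r := by
          have : (0:ℝ) ≤ V₀ / 2 * |t| ^ p := by positivity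
          linarith

set_option maxHeartbeats 2000000 in
theorem stmt18 (N : ℕ) (p q r V₀ : ℝ)
    (hp : 1 < p) (hpq : p < q) (hqN : q < (N : ℝ))
    (hqr : q < r) (hrcrit : r < (N : ℝ) * q / ((N : ℝ) - q))
    (V : EuclideanSpace ℝ (Fin N) → ℝ) (hV : Continuous V)
    (hV₀ : 0 < V₀) (hVlb : ∀ x, V₀ ≤ V x)
    (f : ℝ → ℝ) (hf : Continuous f)
    (h0 : Tendsto (fun t : ℝ => f t / |t| ^ (p - 1)) (𝓝[≠] (0 : ℝ)) (𝓝 0))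
    (hinf : Tendsto (fun t : ℝ => f t / |t| ^ (r - 1)) (Filter.cocompact ℝ) (𝓝 0)) :
    ∃ κ > (0:ℝ), ∀ u : EuclideanSpace ℝ (Fin N) → ℝ,
      ContDiff ℝ 1 u → HasCompactSupport u → u ≠ 0 →
      pNormPow N V p u + pNormPow N V q u
        = ∫ x : EuclideanSpace ℝ (Fin N), f (u x) * u x →
      κ ≤ vNorm N V p u + vNorm N V q u := by
  obtain ⟨C₁, hC₁1, hC₁⟩ := bound_aux (by linarith) (by linarith) hV₀ hf h0 hinf
  have hp0 : (0:ℝ) < p := by linarith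
  have hq0 : (0:ℝ) < q := by linarith
  have hq1 : (1:ℝ) < q := by linarith
  have hr0 : (0:ℝ) < r := by linarith
  have hN0 : (0:ℝ) < N := by linarith
  have hNq : (0:ℝ) < (N:ℝ) - q := by linarith
  set s : ℝ := (N:ℝ) * q / ((N:ℝ) - q) with hsdef
  have hs0 : (0:ℝ) < s := by positivity
  have hrs : r < s := hrcrit
  have hqs : q < s := by
    rw [hsdef, lt_div_iff₀ hNq]
    nlinarith
  have hden : (0:ℝ) < 1/q - 1/s := by
    have := one_div_lt_one_div_of_lt hq0 hqs
    linarith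
  have hnum : (0:ℝ) < 1/r - 1/s := by
    have := one_div_lt_one_div_of_lt hr0 hrs
    linarith
  set θ : ℝ := (1/r - 1/s)/(1/q - 1/s) with hθdef
  have hθ0 : 0 < θ := div_pos hnum hden
  have hθ1 : θ < 1 := by
    rw [hθdef, div_lt_one hden]
    have := one_div_lt_one_div_of_lt hq0 (by linarith : q < r)
    linarith
  have hθeq : θ/q + (1-θ)/s = 1/r := by
    have hmul : θ * (1/q - 1/s) = 1/r - 1/s := by
      rw [hθdef]
      exact div_mul_cancel₀ _ hden.ne'
    have hexpand : θ/q + (1-θ)/s = θ*(1/q - 1/s) + 1/s := by ring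
    rw [hexpand, hmul]
    ring
  have hθq : θ * r < q := by
    have h5 : θ/q < 1/r := by
      have h6 : 0 < (1-θ)/s := div_pos (by linarith) hs0
      linarith
    rw [div_lt_div_iff₀ hq0 hr0] at h5
    linarith
  have habconj : Real.HolderConjugate (q/(θ*r)) (s/((1-θ)*r)) := by
    rw [Real.holderConjugate_iff]
    constructor
    · rw [lt_div_iff₀ (by positivity)]
      linarith
    · rw [inv_div, inv_div]
      calc θ*r/q + (1-θ)*r/s = r*(θ/q + (1-θ)/s) := by ring
      _ = r * (1/r) := by rw [hθeq]
      _ = 1 := by field_simp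
  set CS : ℝ := (SNormLESNormFDerivOfEqConst ℝ
      (volume : Measure (EuclideanSpace ℝ (Fin N))) q : ℝ) with hCSdef
  have hCS0 : 0 ≤ CS := NNReal.coe_nonneg _
  set D : ℝ := (1/V₀)^(θ*r/q) * (CS+1)^((1-θ)*r) with hDdef
  have hD0 : 0 < D := by positivity
  have hC₁0 : 0 < C₁ := by linarith
  set Etot : ℝ := C₁ * D with hEdef
  have hE0 : 0 < Etot := by positivity
  set β : ℝ := (1/Etot)^(q/(r-q)) with hβdef
  have hβ0 : 0 < β := by positivity
  refine ⟨β ^ (1/q), Real.rpow_pos_of_pos hβ0 _, fun u hu1 hu2 hune hNeh => ?_⟩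
  have cu : Continuous u := hu1.continuous
  have cdu : Continuous (fderiv ℝ u) := hu1.continuous_fderiv one_ne_zero
  -- integrability
  have intp := int_abs_rpow cu hu2 hp0
  have intq := int_abs_rpow cu hu2 hq0
  have intr := int_abs_rpow cu hu2 hr0
  have ints := int_abs_rpow cu hu2 hs0
  have intVp := int_V_abs_rpow hV cu hu2 hp0
  have intVq := int_V_abs_rpow hV cu hu2 hq0
  have intGp := int_grad_rpow hu1 hu2 hp0
  have intGq := int_grad_rpow hu1 hu2 hq0
  have intfu : Integrable (fun x => f (u x) * u x) := by
    have hcont : Continuous (fun x => f (u x) * u x) := (hf.comp cu).mul cu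
    have hcs : HasCompactSupport (fun x => f (u x) * u x) :=
      hu2.comp_left (g := fun y : ℝ => f y * y) (mul_zero _)
    exact hcont.integrable_of_hasCompactSupport hcs
  -- notation
  set Ip : ℝ := ∫ x, |u x| ^ p with hIpdef
  set Iq : ℝ := ∫ x, |u x| ^ q with hIqdef
  set Ir : ℝ := ∫ x, |u x| ^ r with hIrdef
  set Is : ℝ := ∫ x, |u x| ^ s with hIsdef
  set Gq : ℝ := ∫ x, ‖fderiv ℝ u x‖ ^ q with hGqdef
  have hApdef : pNormPow N V p u
      = (∫ x, ‖fderiv ℝ u x‖ ^ p) + ∫ x, V x * |u x| ^ p := rfl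
  have hAqdef : pNormPow N V q u = Gq + ∫ x, V x * |u x| ^ q := rfl
  set A : ℝ := pNormPow N V p u with hAdef
  set B : ℝ := pNormPow N V q u with hBdef
  have hIp0 : 0 ≤ Ip := integral_nonneg fun x => Real.rpow_nonneg (abs_nonneg _) _
  have hIq0 : 0 ≤ Iq := integral_nonneg fun x => Real.rpow_nonneg (abs_nonneg _) _
  have hIr0 : 0 ≤ Ir := integral_nonneg fun x => Real.rpow_nonneg (abs_nonneg _) _
  have hIs0 : 0 ≤ Is := integral_nonneg fun x => Real.rpow_nonneg (abs_nonneg _) _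
  have hGq0 : 0 ≤ Gq := integral_nonneg fun x => Real.rpow_nonneg (norm_nonneg _) _
  -- A, B bounds
  have hVpIp : V₀ * Ip ≤ A := by
    have h1 : ∫ x, V₀ * |u x| ^ p ≤ ∫ x, V x * |u x| ^ p := by
      apply integral_mono (intp.const_mul V₀) intVp
      intro x
      exact mul_le_mul_of_nonneg_right (hVlb x) (Real.rpow_nonneg (abs_nonneg _) _)
    rw [integral_const_mul] at h1
    have h2 : 0 ≤ ∫ x, ‖fderiv ℝ u x‖ ^ p :=
      integral_nonneg fun x => Real.rpow_nonneg (norm_nonneg _) _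
    rw [hApdef]
    linarith
  have hVqIq : V₀ * Iq ≤ B := by
    have h1 : ∫ x, V₀ * |u x| ^ q ≤ ∫ x, V x * |u x| ^ q := by
      apply integral_mono (intq.const_mul V₀) intVq
      intro x
      exact mul_le_mul_of_nonneg_right (hVlb x) (Real.rpow_nonneg (abs_nonneg _) _)
    rw [integral_const_mul] at h1
    rw [hAqdef]
    linarith
  have hGqB : Gq ≤ B := by
    have h1 : 0 ≤ ∫ x, V x * |u x| ^ q := integral_nonneg fun x =>
      mul_nonneg ((hV₀.trans_le (hVlb x)).le) (Real.rpow_nonneg (abs_nonneg _) _)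
    rw [hAqdef]
    linarith
  have hA0 : 0 ≤ A := by
    have h2 : 0 ≤ ∫ x, ‖fderiv ℝ u x‖ ^ p :=
      integral_nonneg fun x => Real.rpow_nonneg (norm_nonneg _) _
    have h1 : 0 ≤ ∫ x, V x * |u x| ^ p := integral_nonneg fun x =>
      mul_nonneg ((hV₀.trans_le (hVlb x)).le) (Real.rpow_nonneg (abs_nonneg _) _)
    rw [hApdef]
    linarith
  -- B > 0
  obtain ⟨x₀, hx₀⟩ : ∃ x, u x ≠ 0 := by
    by_contra h
    push_neg at h
    exact hune (funext h)
  have hB0 : 0 < B := by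
    have h1 : 0 < ∫ x, V x * |u x| ^ q := by
      apply integral_pos_aux (hV.mul ((cont_abs_rpow hq0).comp cu)) intVq
      · intro x
        exact mul_nonneg ((hV₀.trans_le (hVlb x)).le) (Real.rpow_nonneg (abs_nonneg _) _)
      · exact mul_pos (hV₀.trans_le (hVlb x₀))
          (Real.rpow_pos_of_pos (abs_pos.mpr hx₀) _)
    rw [hAqdef]
    linarith
  -- Nehari bound : B ≤ C₁ * Ir
  have hBIr : B ≤ C₁ * Ir := by
    have h1 : A + B ≤ V₀/2 * Ip + C₁ * Ir := by
      rw [hNeh]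
      calc ∫ x, f (u x) * u x ≤ ∫ x, (V₀/2 * |u x| ^ p + C₁ * |u x| ^ r) := by
            apply integral_mono intfu ((intp.const_mul _).add (intr.const_mul _))
            intro x
            exact hC₁ (u x)
      _ = V₀/2 * Ip + C₁ * Ir := by
            rw [integral_add (intp.const_mul _) (intr.const_mul _),
              integral_const_mul, integral_const_mul]
    linarith
  -- Sobolev : Is ^ (1/s) ≤ CS * Gq ^ (1/q)
  have hfinrank : Module.finrank ℝ (EuclideanSpace ℝ (Fin N)) = N :=
    finrank_euclideanSpace_fin
  have hsob : Is ^ (1/s) ≤ CS * Gq ^ (1/q) := by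
    have hq1' : (1:ℝ≥0) ≤ q.toNNReal := by
      rw [← Real.toNNReal_one]
      exact Real.toNNReal_mono hq1.le
    have hn : 0 < Module.finrank ℝ (EuclideanSpace ℝ (Fin N)) := by
      rw [hfinrank]
      exact_mod_cast hN0
    have hps : ((s.toNNReal : ℝ))⁻¹ = (q.toNNReal:ℝ)⁻¹
        - ((Module.finrank ℝ (EuclideanSpace ℝ (Fin N)) : ℝ))⁻¹ := by
      rw [hfinrank, Real.coe_toNNReal _ hs0.le, Real.coe_toNNReal _ hq0.le, hsdef, inv_div]
      field_simp
    have hsobE := eLpNorm_le_eLpNorm_fderiv_of_eq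
      (volume : Measure (EuclideanSpace ℝ (Fin N))) hu1 hu2 hq1' hn hps
    have mu_u : MemLp u ((s.toNNReal : ℝ≥0∞)) volume :=
      cu.memLp_of_hasCompactSupport hu2
    have mu_du : MemLp (fderiv ℝ u) ((q.toNNReal : ℝ≥0∞)) volume :=
      cdu.memLp_of_hasCompactSupport (hu2.fderiv ℝ)
    have hsne : ((s.toNNReal : ℝ≥0∞)) ≠ 0 := by
      simp [Real.toNNReal_eq_zero]
      linarith
    have hqne : ((q.toNNReal : ℝ≥0∞)) ≠ 0 := by
      simp [Real.toNNReal_eq_zero]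
      linarith
    rw [mu_u.eLpNorm_eq_integral_rpow_norm hsne ENNReal.coe_ne_top,
      mu_du.eLpNorm_eq_integral_rpow_norm hqne ENNReal.coe_ne_top] at hsobE
    simp only [ENNReal.coe_toReal, Real.coe_toNNReal _ hs0.le,
      Real.coe_toNNReal _ hq0.le, Real.norm_eq_abs] at hsobE
    rw [← ENNReal.ofReal_coe_nnreal, ← ENNReal.ofReal_mul (NNReal.coe_nonneg _)] at hsobE
    have := (ENNReal.ofReal_le_ofReal_iff (by positivity)).mp hsobE
    rw [one_div, one_div, hCSdef]
    exact this
  -- Hölder : Ir ≤ Iq ^ (θ*r/q) * Is ^ ((1-θ)*r/s)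
  have hHolder : Ir ≤ Iq ^ (θ*r/q) * Is ^ ((1-θ)*r/s) := by
    have hmem1 : MemLp (fun x => |u x| ^ (θ*r)) (ENNReal.ofReal (q/(θ*r))) volume := by
      apply Continuous.memLp_of_hasCompactSupport ((cont_abs_rpow (by positivity)).comp cu)
      exact hu2.comp_left (g := fun y : ℝ => |y| ^ (θ*r))
        (by simp [Real.zero_rpow (by positivity : (0:ℝ) < θ*r).ne'])
    have hmem2 : MemLp (fun x => |u x| ^ ((1-θ)*r)) (ENNReal.ofReal (s/((1-θ)*r))) volume := by
      have h1θ : (0:ℝ) < (1-θ)*r := by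
        have : (0:ℝ) < 1 - θ := by linarith
        positivity
      apply Continuous.memLp_of_hasCompactSupport ((cont_abs_rpow h1θ).comp cu)
      exact hu2.comp_left (g := fun y : ℝ => |y| ^ ((1-θ)*r))
        (by simp [Real.zero_rpow h1θ.ne'])
    have hH := integral_mul_le_Lp_mul_Lq_of_nonneg habconj
      (Eventually.of_forall fun x => Real.rpow_nonneg (abs_nonneg _) _)
      (Eventually.of_forall fun x => Real.rpow_nonneg (abs_nonneg _) _) hmem1 hmem2
    have e1 : (∫ x, |u x| ^ (θ*r) * |u x| ^ ((1-θ)*r)) = Ir := by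
      rw [hIrdef]
      apply integral_congr_ae
      apply Eventually.of_forall
      intro x
      show |u x|^(θ*r) * |u x|^((1-θ)*r) = |u x| ^ r
      have h : |u x|^(θ*r + (1-θ)*r) = |u x|^(θ*r) * |u x|^((1-θ)*r) :=
        Real.rpow_add' (abs_nonneg _)
          (by rw [show θ*r + (1-θ)*r = r from by ring]; exact hr0.ne')
      rw [← h]
      congr 1
      ring
    have e2 : (∫ x, (|u x| ^ (θ*r)) ^ (q/(θ*r))) = Iq := by
      rw [hIqdef]
      apply integral_congr_ae
      apply Eventually.of_forall
      intro x
      show (|u x|^(θ*r)) ^ (q/(θ*r)) = |u x| ^ q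
      rw [← Real.rpow_mul (abs_nonneg (u x))]
      congr 1
      have hθr : θ*r ≠ 0 := by positivity
      field_simp
    have e3 : (∫ x, (|u x| ^ ((1-θ)*r)) ^ (s/((1-θ)*r))) = Is := by
      rw [hIsdef]
      apply integral_congr_ae
      apply Eventually.of_forall
      intro x
      show (|u x|^((1-θ)*r)) ^ (s/((1-θ)*r)) = |u x| ^ s
      rw [← Real.rpow_mul (abs_nonneg (u x))]
      congr 1
      have h1θ : (1-θ)*r ≠ 0 := by
        have : (0:ℝ) < 1 - θ := by linarith
        positivity
      field_simp
      exact div_self (sub_pos.mpr hθ1).ne'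
    rw [e1, e2, e3] at hH
    have e4 : 1/(q/(θ*r)) = θ*r/q := one_div_div _ _
    have e5 : 1/(s/((1-θ)*r)) = (1-θ)*r/s := one_div_div _ _
    rw [e4, e5] at hH
    exact hH
  -- combine: Ir ≤ D * B ^ (r/q)
  have h1θ0 : (0:ℝ) ≤ (1-θ)*r := by
    have : (0:ℝ) ≤ 1 - θ := by linarith
    positivity
  have hIqB : Iq ≤ 1/V₀ * B := by
    rw [one_div, inv_mul_eq_div, le_div_iff₀ hV₀]
    linarith [mul_comm Iq V₀]
  have hIrD : Ir ≤ D * B ^ (r/q) := by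
    have hS2 : Iq ^ (θ*r/q) ≤ (1/V₀ * B) ^ (θ*r/q) :=
      Real.rpow_le_rpow hIq0 hIqB (by positivity)
    have hsob' : Is ^ ((1-θ)*r/s) ≤ ((CS+1) * B^(1/q)) ^ ((1-θ)*r) := by
      have h1 : Is ^ ((1-θ)*r/s) = (Is ^ (1/s)) ^ ((1-θ)*r) := by
        rw [← Real.rpow_mul hIs0]
        congr 1
        ring
      rw [h1]
      apply Real.rpow_le_rpow (Real.rpow_nonneg hIs0 _) _ h1θ0
      calc Is^(1/s) ≤ CS * Gq^(1/q) := hsob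
      _ ≤ (CS+1) * B^(1/q) := by
        apply mul_le_mul (by linarith) (Real.rpow_le_rpow hGq0 hGqB (by positivity))
          (Real.rpow_nonneg hGq0 _) (by linarith)
    have hBq0 : (0:ℝ) ≤ 1/V₀ * B := by positivity
    calc Ir ≤ Iq ^ (θ*r/q) * Is ^ ((1-θ)*r/s) := hHolder
    _ ≤ (1/V₀ * B)^(θ*r/q) * ((CS+1) * B^(1/q))^((1-θ)*r) :=
        mul_le_mul hS2 hsob' (Real.rpow_nonneg hIs0 _) (Real.rpow_nonneg hBq0 _)
    _ = D * B ^ (r/q) := by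
        rw [Real.mul_rpow (by positivity) hB0.le,
          Real.mul_rpow (by linarith : (0:ℝ) ≤ CS+1) (Real.rpow_nonneg hB0.le _),
          ← Real.rpow_mul hB0.le, hDdef]
        have hgroup : (1/V₀)^(θ*r/q) * B^(θ*r/q) * ((CS+1)^((1-θ)*r) * B^(1/q*((1-θ)*r)))
            = (1/V₀)^(θ*r/q) * (CS+1)^((1-θ)*r) * (B^(θ*r/q) * B^(1/q*((1-θ)*r))) := by
          ring
        rw [hgroup, ← Real.rpow_add hB0]
        congr 1
        field_simp
        ring
  -- B bounded below
  have hBE : B ≤ Etot * B^(r/q) := by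
    calc B ≤ C₁ * Ir := hBIr
    _ ≤ C₁ * (D * B^(r/q)) := mul_le_mul_of_nonneg_left hIrD (by linarith)
    _ = Etot * B^(r/q) := by rw [hEdef]; ring
  have h7 : 1 ≤ Etot * B^(r/q - 1) := by
    have h8 : B^(r/q) = B^(r/q - 1) * B := (rpow_sub_one_mul hB0).symm
    rw [h8, ← mul_assoc] at hBE
    have h9 : 1 * B ≤ Etot * B^(r/q-1) * B := by rw [one_mul]; exact hBE
    exact le_of_mul_le_mul_right h9 hB0
  have h9 : 1/Etot ≤ B^(r/q - 1) := by
    rw [div_le_iff₀ hE0]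
    linarith [mul_comm Etot (B^(r/q-1))]
  have h10 : β ≤ B := by
    have h11 := Real.rpow_le_rpow (by positivity) h9 (div_nonneg hq0.le (by linarith : (0:ℝ) ≤ r - q))
    rw [← Real.rpow_mul hB0.le] at h11
    have hexp : (r/q-1)*(q/(r-q)) = 1 := by
      field_simp
      exact div_self (ne_of_gt (by linarith : (0:ℝ) < r - q))
    rw [hexp, Real.rpow_one] at h11
    rw [hβdef]
    exact h11
  have hvq : β^(1/q) ≤ B^(1/q) := Real.rpow_le_rpow hβ0.le h10 (by positivity)
  have hvp : (0:ℝ) ≤ A^(1/p) := Real.rpow_nonneg hA0 _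
  have hveq : vNorm N V p u + vNorm N V q u = A^(1/p) + B^(1/q) := rfl
  rw [hveq]
  linarith
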